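/- Fix a finite set I of agents, a finite set C of categories, capacities q_c ∈ ℕ, a set C* ⊆ C of preferential treatment categories, and a precedence order whose restriction to C is a strict total order. Let P and P' be priority profiles such that P' is obtained from P by agent i hiding categories. Let μ be an eligibility-compliant matching for the sequential reserve system with profile P that has maximum cardinality, is a maximum beneficiary assignment, and respects precedence over categories, and let μ' be such a matching for the system with profile P'. If μ(i) = ∅, then μ'(i) = ∅. -/

import Mathlib

open Finset

variable {I C : Type*}

/-- Agent `i` is eligible for category `c` when `i ≻_c ∅`. -/
def Eligible (prio : C → Option I → Option I → Prop) (i : I) (c : C) : Prop :=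
  prio c (some i) none

/-- `μ` is a matching: the set of agents assigned to each category `c`
has at most `q c` elements. -/
def IsMatching [Fintype I] [DecidableEq C] (q : C → ℕ) (μ : I → Option C) : Prop :=
  ∀ c : C, (Finset.univ.filter (fun i => μ i = some c)).card ≤ q c

/-- `μ` is eligibility-compliant: assigned agents are eligible. -/
def Compliant (prio : C → Option I → Option I → Prop) (μ : I → Option C) : Prop :=
  ∀ (i : I) (c : C), μ i = some c → Eligible prio i c

/-- The number of agents matched under `μ`. -/
def matchedCount [Fintype I] (μ : I → Option C) : ℕ :=
  (Finset.univ.filter (fun i => (μ i).isSome)).card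

/-- `μ` has maximum cardinality among eligibility-compliant matchings. -/
def MaxCard [Fintype I] [DecidableEq C] (q : C → ℕ)
    (prio : C → Option I → Option I → Prop) (μ : I → Option C) : Prop :=
  ∀ μ' : I → Option C, IsMatching q μ' → Compliant prio μ' →
    matchedCount μ' ≤ matchedCount μ

/-- Non-wastefulness: an eligible unmatched agent implies the category is full. -/
def NonWasteful [Fintype I] [DecidableEq C] (q : C → ℕ)
    (prio : C → Option I → Option I → Prop) (μ : I → Option C) : Prop :=
  ∀ (i : I) (c : C), Eligible prio i c → μ i = none →
    (Finset.univ.filter (fun j => μ j = some c)).card = q c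

/-- Respect for priorities: a matched agent has higher priority (at its
category) than every unmatched agent. -/
def RespectsPriorities (prio : C → Option I → Option I → Prop)
    (μ : I → Option C) : Prop :=
  ∀ (i i' : I) (c : C), μ i = some c → μ i' = none → prio c (some i) (some i')

/-- `μ'` is obtained from `μ` by a swap step at category `c`: an unmatched
agent `i`, eligible for `c`, replaces the `≻_c`-least agent `i'` currently
assigned to `c`, where `i ≻_c i'`. -/
def SwapStep (prio : C → Option I → Option I → Prop) (c : C)
    (μ μ' : I → Option C) : Prop :=
  ∃ i i' : I,
    μ i = none ∧ Eligible prio i c ∧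
    μ i' = some c ∧
    (∀ j : I, μ j = some c → j ≠ i' → prio c (some j) (some i')) ∧
    prio c (some i) (some i') ∧
    μ' i = some c ∧ μ' i' = none ∧
    (∀ j : I, j ≠ i → j ≠ i' → μ' j = μ j)

/-- One swap step between eligibility-compliant matchings. -/
def SwapRel [Fintype I] [DecidableEq C] (q : C → ℕ)
    (prio : C → Option I → Option I → Prop) (μ μ' : I → Option C) : Prop :=
  IsMatching q μ ∧ Compliant prio μ ∧ IsMatching q μ' ∧ Compliant prio μ' ∧
    ∃ c : C, SwapStep prio c μ μ'

/-- `μ` is terminal: no swap step applies to `μ`. -/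
def Terminal (prio : C → Option I → Option I → Prop) (μ : I → Option C) : Prop :=
  ¬ ∃ (i i' : I) (c : C),
      μ i = none ∧ Eligible prio i c ∧ μ i' = some c ∧
      (∀ j : I, μ j = some c → j ≠ i' → prio c (some j) (some i')) ∧
      prio c (some i) (some i')

/-- The strict part `▷` of the precedence preorder, extended to `C ∪ {∅}`
by `c ▷ ∅` for every category `c`. -/
def StrictPrec (prec : C → C → Prop) : Option C → Option C → Prop
  | some c, some c' => prec c c' ∧ ¬ prec c' c
  | some _, none => True
  | none, _ => False

/-- The number of agents assigned to preferential treatment categories. -/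
def benefCount [Fintype I] [DecidableEq C] (Cstar : Finset C)
    (μ : I → Option C) : ℕ :=
  ∑ c ∈ Cstar, (Finset.univ.filter (fun i => μ i = some c)).card

/-- `μ` is a maximum beneficiary assignment. -/
def MaxBenef [Fintype I] [DecidableEq C] (q : C → ℕ)
    (prio : C → Option I → Option I → Prop) (Cstar : Finset C)
    (μ : I → Option C) : Prop :=
  ∀ μ' : I → Option C, IsMatching q μ' → Compliant prio μ' →
    benefCount Cstar μ' ≤ benefCount Cstar μ

/-- Order preservation by swapping. -/
def OrderPresSwap (prio : C → Option I → Option I → Prop) (prec : C → C → Prop)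
    (μ : I → Option C) : Prop :=
  ¬ ∃ (i j : I) (ci cj : C),
      μ i = some ci ∧ μ j = some cj ∧
      StrictPrec prec (some cj) (some ci) ∧
      prio cj (some i) (some j) ∧
      Eligible prio j ci ∧ Eligible prio i cj

/-- Respect for precedence over categories. -/
def RespectsPrec [Fintype I] [DecidableEq C] (q : C → ℕ)
    (prio : C → Option I → Option I → Prop) (Cstar : Finset C)
    (prec : C → C → Prop) (μ : I → Option C) : Prop :=
  ¬ ∃ (i j : I) (cj : C),
      μ j = some cj ∧
      StrictPrec prec (some cj) (μ i) ∧
      prio cj (some i) (some j) ∧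
      ∃ μ' : I → Option C,
        IsMatching q μ' ∧ Compliant prio μ' ∧
        (∀ (k : I) (ck : C), μ k = some ck →
          StrictPrec prec (some ck) (some cj) → μ' k = μ k) ∧
        (∀ ℓ : I, μ ℓ = some cj → prio cj (some ℓ) (some i) → μ' ℓ = μ ℓ) ∧
        μ' i = some cj ∧
        MaxCard q prio μ' ∧ MaxBenef q prio Cstar μ'

/-- Order preservation for a hybrid sequential reserve system with open
categories `c01` (processed first) and `c02` (processed last). -/
def OrderPresHybrid (prio : C → Option I → Option I → Prop) (Cstar : Finset C)
    (c01 c02 : C) (μ : I → Option C) : Prop :=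
  ∀ (i j : I) (cj : C), μ j = some cj → prio cj (some i) (some j) →
    ((∀ ci : C, μ i = some ci → (ci ∈ Cstar ∨ ci = c02) →
        Eligible prio j ci → cj ≠ c01) ∧
     ((cj ∈ Cstar ∨ cj = c01) → Eligible prio i cj → μ i ≠ some c02))

/-- `P'` is an `i`-improvement of `P`: the orders agree off `i`, and `i`'s
priority weakly increases in every category. -/
def Improves (i : I) (P P' : C → Option I → Option I → Prop) : Prop :=
  ∀ c : C,
    (∀ x y : Option I, x ≠ some i → y ≠ some i → (P' c x y ↔ P c x y)) ∧
    (∀ x : Option I, x ≠ some i → P c (some i) x → P' c (some i) x)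


private lemma prec_min_exists {C : Type*} (prec : C → C → Prop)
    (hTrans : ∀ a b c : C, prec a b → prec b c → prec a c)
    (hTotal : ∀ a b : C, prec a b ∨ prec b a) :
    ∀ (S : Finset C), S.Nonempty → ∃ c ∈ S, ∀ f ∈ S, prec c f := by
  classical
  intro S
  induction S using Finset.cons_induction with
  | empty => intro h; exact absurd h (by simp)
  | cons a s ha ih =>
    intro _
    rcases s.eq_empty_or_nonempty with rfl | hs
    · refine ⟨a, Finset.mem_cons_self a _, ?_⟩
      intro f hf
      rcases Finset.mem_cons.mp hf with rfl | hf
      · exact (hTotal f f).elim id id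
      · exact absurd hf (by simp)
    · obtain ⟨c, hc, hmin⟩ := ih hs
      rcases hTotal a c with hac | hca
      · refine ⟨a, Finset.mem_cons_self a _, ?_⟩
        intro f hf
        rcases Finset.mem_cons.mp hf with rfl | hf
        · exact (hTotal f f).elim id id
        · exact hTrans a c f hac (hmin f hf)
      · refine ⟨c, Finset.mem_cons_of_mem hc, ?_⟩
        intro f hf
        rcases Finset.mem_cons.mp hf with rfl | hf
        · exact hca
        · exact hmin f hf

private lemma p_max_exists {I : Type*} (p : Option I → Option I → Prop)
    (hp : IsStrictTotalOrder (Option I) p) :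
    ∀ (V : Finset I), V.Nonempty → ∃ x ∈ V, ∀ y ∈ V, y ≠ x → p (some x) (some y) := by
  classical
  haveI := hp
  intro V
  induction V using Finset.cons_induction with
  | empty => intro h; exact absurd h (by simp)
  | cons a s ha ih =>
    intro _
    rcases s.eq_empty_or_nonempty with rfl | hs
    · refine ⟨a, Finset.mem_cons_self a _, ?_⟩
      intro y hy hne
      rcases Finset.mem_cons.mp hy with rfl | hy
      · exact absurd rfl hne
      · exact absurd hy (by simp)
    · obtain ⟨c, hc, hmax⟩ := ih hs
      have hac : a ≠ c := fun h => ha (h ▸ hc)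
      rcases trichotomous_of p (some a) (some c) with h | h | h
      · refine ⟨a, Finset.mem_cons_self a _, ?_⟩
        intro y hy hne
        rcases Finset.mem_cons.mp hy with rfl | hy
        · exact absurd rfl hne
        · by_cases hyc : y = c
          · exact hyc ▸ h
          · exact _root_.trans h (hmax y hy hyc)
      · exact absurd (Option.some_injective _ h) hac
      · refine ⟨c, Finset.mem_cons_of_mem hc, ?_⟩
        intro y hy hne
        rcases Finset.mem_cons.mp hy with rfl | hy
        · exact h
        · exact hmax y hy hne

private lemma card_filter_insert {α : Type*} [DecidableEq α] (a : α) (T : Finset α) (ha : a ∉ T)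
    (pr : α → Prop) [DecidablePred pr] :
    ((insert a T).filter pr).card = (T.filter pr).card + (if pr a then 1 else 0) := by
  rw [Finset.filter_insert]
  split_ifs with h
  · rw [Finset.card_insert_of_notMem (fun hmem => ha (Finset.mem_of_mem_filter _ hmem))]
  · rw [add_zero]

private lemma filter_ite_card {I C : Type*} [Fintype I] [DecidableEq I] [DecidableEq C]
    (T : Finset I) (g₁ g₂ : I → Option C) (o : Option C) :
    (univ.filter (fun x => (if x ∈ T then g₂ x else g₁ x) = o)).card
      + (T.filter (fun x => g₁ x = o)).card
    = (univ.filter (fun x => g₁ x = o)).card + (T.filter (fun x => g₂ x = o)).card := by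
  classical
  have h1 : univ.filter (fun x => (if x ∈ T then g₂ x else g₁ x) = o)
      = (univ.filter (fun x => x ∉ T ∧ g₁ x = o)) ∪ (T.filter (fun x => g₂ x = o)) := by
    ext x
    by_cases hx : x ∈ T <;> simp [hx]
  have h2 : univ.filter (fun x => g₁ x = o)
      = (univ.filter (fun x => x ∉ T ∧ g₁ x = o)) ∪ (T.filter (fun x => g₁ x = o)) := by
    ext x
    by_cases hx : x ∈ T <;> simp [hx]
  have d1 : Disjoint (univ.filter (fun x => x ∉ T ∧ g₁ x = o)) (T.filter (fun x => g₂ x = o)) := by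
    rw [Finset.disjoint_left]
    intro x hx hx2
    exact (Finset.mem_filter.mp hx).2.1 (Finset.mem_of_mem_filter _ hx2)
  have d2 : Disjoint (univ.filter (fun x => x ∉ T ∧ g₁ x = o)) (T.filter (fun x => g₁ x = o)) := by
    rw [Finset.disjoint_left]
    intro x hx hx2
    exact (Finset.mem_filter.mp hx).2.1 (Finset.mem_of_mem_filter _ hx2)
  rw [h1, h2, Finset.card_union_of_disjoint d1, Finset.card_union_of_disjoint d2]
  omega

private lemma matched_split {I C : Type*} [Fintype I] [DecidableEq C] (μ : I → Option C) :
    matchedCount μ + (univ.filter (fun x => μ x = none)).card = Fintype.card I := by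
  classical
  have h := Finset.card_filter_add_card_filter_not (s := (univ : Finset I))
    (p := fun x => (μ x).isSome = true)
  have h2 : (univ.filter (fun a => ¬ (μ a).isSome = true)) = univ.filter (fun x : I => μ x = none) := by
    apply Finset.filter_congr
    intro x _
    simp [Option.not_isSome_iff_eq_none]
  rw [h2] at h
  simpa [matchedCount, Finset.card_univ] using h

private lemma stuck_case {I C : Type*} [Fintype I] [DecidableEq I] [Fintype C] [DecidableEq C]
    (q : C → ℕ) (p : C → Option I → Option I → Prop)
    (ν ν' : I → Option C)
    (hνM : IsMatching q ν) (hνC : Compliant p ν) (hνmax : MaxCard q p ν)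
    (hν'M : IsMatching q ν') (hν'C : Compliant p ν')
    (T : Finset I) (fstar : C)
    (hA : ∀ x ∈ T, ν x ≠ ν' x)
    (hcnt : ∀ o : Option C, (T.filter (fun x => ν' x = o)).card + (if o = none then 1 else 0)
        = (T.filter (fun x => ν x = o)).card + (if o = some fstar then 1 else 0))
    (hstuck : ∀ x, ν x = some fstar → ν' x ≠ some fstar → x ∈ T) : False := by
  classical
  -- the augmented matching
  set h : I → Option C := fun x => if x ∈ T then ν' x else ν x with hh
  have key : ∀ o : Option C,
      (univ.filter (fun x => h x = o)).card + (T.filter (fun x => ν x = o)).card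
      = (univ.filter (fun x => ν x = o)).card + (T.filter (fun x => ν' x = o)).card := by
    intro o
    simp only [hh]
    exact filter_ite_card T ν ν' o
  -- category fstar is not full under ν
  have hAsub : (univ.filter (fun x => ν x = some fstar)) \ (univ.filter (fun x => ν' x = some fstar))
      = T.filter (fun x => ν x = some fstar) := by
    ext x
    simp only [Finset.mem_sdiff, Finset.mem_filter, Finset.mem_univ, true_and]
    constructor
    · rintro ⟨hx, hx'⟩
      exact ⟨hstuck x hx hx', hx⟩
    · rintro ⟨hxT, hx⟩
      exact ⟨hx, fun hx' => hA x hxT (hx.trans hx'.symm)⟩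
  have hBsub : T.filter (fun x => ν' x = some fstar) ⊆
      (univ.filter (fun x => ν' x = some fstar)) \ (univ.filter (fun x => ν x = some fstar)) := by
    intro x hx
    have hxT : x ∈ T := Finset.mem_of_mem_filter _ hx
    have hx' : ν' x = some fstar := (Finset.mem_filter.mp hx).2
    refine Finset.mem_sdiff.mpr ⟨Finset.mem_filter.mpr ⟨Finset.mem_univ x, hx'⟩, ?_⟩
    intro hmem
    exact hA x hxT (((Finset.mem_filter.mp hmem).2).trans hx'.symm)
  have e6 : (T.filter (fun x => ν' x = some fstar)).card
      = (T.filter (fun x => ν x = some fstar)).card + 1 := by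
    have := hcnt (some fstar)
    simpa using this
  have hlt : (univ.filter (fun x => ν x = some fstar)).card
      < (univ.filter (fun x => ν' x = some fstar)).card := by
    have e1 := Finset.card_sdiff_add_card_inter
      (univ.filter (fun x => ν x = some fstar)) (univ.filter (fun x => ν' x = some fstar))
    have e2 := Finset.card_sdiff_add_card_inter
      (univ.filter (fun x => ν' x = some fstar)) (univ.filter (fun x => ν x = some fstar))
    have e3 : ((univ.filter (fun x => ν x = some fstar)) ∩ (univ.filter (fun x => ν' x = some fstar))).card
        = ((univ.filter (fun x => ν' x = some fstar)) ∩ (univ.filter (fun x => ν x = some fstar))).card := by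
      rw [Finset.inter_comm]
    have e4 := congrArg Finset.card hAsub
    have e5 := Finset.card_le_card hBsub
    omega
  have hq : (univ.filter (fun x => ν x = some fstar)).card + 1 ≤ q fstar :=
    Nat.lt_of_lt_of_le hlt (hν'M fstar)
  -- h is a matching
  have hmatch : IsMatching q h := by
    intro c
    have k := key (some c)
    have hc2 := hcnt (some c)
    by_cases hcf : c = fstar
    · subst hcf
      simp at hc2
      omega
    · have : (some c = some fstar) = False := by simp [hcf]
      simp only [reduceCtorEq, if_false, this] at hc2
      have := hνM c
      omega
  have hcomp : Compliant p h := by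
    intro x c hxc
    by_cases hx : x ∈ T
    · exact hν'C x c (by simpa [hh, hx] using hxc)
    · exact hνC x c (by simpa [hh, hx] using hxc)
  have hnone : (univ.filter (fun x => h x = none)).card + 1 = (univ.filter (fun x => ν x = none)).card := by
    have k := key none
    have hc2 := hcnt none
    simp at hc2
    omega
  have s1 := matched_split (μ := h)
  have s2 := matched_split (μ := ν)
  have := hνmax h hmatch hcomp
  omega

private lemma finish_case {I C : Type*} [Fintype I] [DecidableEq I] [Fintype C] [DecidableEq C]
    (q : C → ℕ) (Cstar : Finset C) (prec : C → C → Prop)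
    (hTrans : ∀ a b c : C, prec a b → prec b c → prec a c)
    (hTotal : ∀ a b : C, prec a b ∨ prec b a)
    (hAnti : ∀ a b : C, prec a b → prec b a → a = b)
    (p : C → Option I → Option I → Prop)
    (hp : ∀ c : C, IsStrictTotalOrder (Option I) (p c))
    (ν ν' : I → Option C)
    (hνM : IsMatching q ν) (hνC : Compliant p ν) (hνmax : MaxCard q p ν)
    (hνben : MaxBenef q p Cstar ν) (hνr : RespectsPrec q p Cstar prec ν)
    (hν'M : IsMatching q ν') (hν'C : Compliant p ν') (hν'max : MaxCard q p ν')
    (hν'ben : MaxBenef q p Cstar ν') (hν'r : RespectsPrec q p Cstar prec ν')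
    (T : Finset I) (fstar : C) (a : I) (haT : a ∉ T)
    (hνa : ν a = some fstar) (hν'a : ν' a = none)
    (hA : ∀ x ∈ T, ν x ≠ ν' x)
    (hcnt : ∀ o : Option C, (T.filter (fun x => ν' x = o)).card + (if o = none then 1 else 0)
        = (T.filter (fun x => ν x = o)).card + (if o = some fstar then 1 else 0)) : False := by
  classical
  set T' : Finset I := insert a T with hT'
  have hA' : ∀ x ∈ T', ν x ≠ ν' x := by
    intro x hx
    rcases Finset.mem_insert.mp hx with rfl | hx
    · rw [hνa, hν'a]; simp
    · exact hA x hx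
  have hFIN : ∀ o : Option C,
      (T'.filter (fun x => ν' x = o)).card = (T'.filter (fun x => ν x = o)).card := by
    intro o
    rw [hT', card_filter_insert a T haT (fun x => ν' x = o),
      card_filter_insert a T haT (fun x => ν x = o)]
    have hc := hcnt o
    rw [hν'a, hνa]
    rcases o with _ | c
    · simp at hc ⊢; omega
    · rcases eq_or_ne c fstar with rfl | hcf
      · simp at hc ⊢; omega
      · simp [hcf, Ne.symm hcf] at hc ⊢
        omega
  -- the two exchanged matchings
  set h : I → Option C := fun x => if x ∈ T' then ν' x else ν x with hh
  set g : I → Option C := fun x => if x ∈ T' then ν x else ν' x with hg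
  have keyh : ∀ o : Option C,
      (univ.filter (fun x => h x = o)).card = (univ.filter (fun x => ν x = o)).card := by
    intro o
    have k : (univ.filter (fun x => h x = o)).card + (T'.filter (fun x => ν x = o)).card
        = (univ.filter (fun x => ν x = o)).card + (T'.filter (fun x => ν' x = o)).card := by
      simp only [hh]; exact filter_ite_card T' ν ν' o
    have := hFIN o
    omega
  have keyg : ∀ o : Option C,
      (univ.filter (fun x => g x = o)).card = (univ.filter (fun x => ν' x = o)).card := by
    intro o
    have k : (univ.filter (fun x => g x = o)).card + (T'.filter (fun x => ν' x = o)).card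
        = (univ.filter (fun x => ν' x = o)).card + (T'.filter (fun x => ν x = o)).card := by
      simp only [hg]; exact filter_ite_card T' ν' ν o
    have := hFIN o
    omega
  -- h is valid w.r.t. ν's counts
  have hmatchh : IsMatching q h := by
    intro c; rw [keyh (some c)]; exact hνM c
  have hcomph : Compliant p h := by
    intro x c hxc
    by_cases hx : x ∈ T'
    · exact hν'C x c (by simpa [hh, hx] using hxc)
    · exact hνC x c (by simpa [hh, hx] using hxc)
  have hmch : matchedCount h = matchedCount ν := by
    have s1 := matched_split (μ := h)
    have s2 := matched_split (μ := ν)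
    have := keyh none
    omega
  have hbch : benefCount Cstar h = benefCount Cstar ν := by
    unfold benefCount
    exact Finset.sum_congr rfl (fun c _ => keyh (some c))
  have hMCh : MaxCard q p h := by
    intro ρ h1 h2; rw [hmch]; exact hνmax ρ h1 h2
  have hMBh : MaxBenef q p Cstar h := by
    intro ρ h1 h2; rw [hbch]; exact hνben ρ h1 h2
  -- g is valid w.r.t. ν''s counts
  have hmatchg : IsMatching q g := by
    intro c; rw [keyg (some c)]; exact hν'M c
  have hcompg : Compliant p g := by
    intro x c hxc
    by_cases hx : x ∈ T'
    · exact hνC x c (by simpa [hg, hx] using hxc)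
    · exact hν'C x c (by simpa [hg, hx] using hxc)
  have hmcg : matchedCount g = matchedCount ν' := by
    have s1 := matched_split (μ := g)
    have s2 := matched_split (μ := ν')
    have := keyg none
    omega
  have hbcg : benefCount Cstar g = benefCount Cstar ν' := by
    unfold benefCount
    exact Finset.sum_congr rfl (fun c _ => keyg (some c))
  have hMCg : MaxCard q p g := by
    intro ρ h1 h2; rw [hmcg]; exact hν'max ρ h1 h2
  have hMBg : MaxBenef q p Cstar g := by
    intro ρ h1 h2; rw [hbcg]; exact hν'ben ρ h1 h2
  -- the earliest category touched by the exchange set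
  set S : Finset C := univ.filter (fun c => ∃ x ∈ T', ν x = some c) with hS
  have haT' : a ∈ T' := Finset.mem_insert_self a T
  have hSne : S.Nonempty := ⟨fstar, by
    rw [hS]
    exact Finset.mem_filter.mpr ⟨Finset.mem_univ _, ⟨a, haT', hνa⟩⟩⟩
  obtain ⟨cs, hcsS, hcsmin⟩ := prec_min_exists prec hTrans hTotal S hSne
  set VA : Finset I := T'.filter (fun x => ν x = some cs) with hVA
  set VB : Finset I := T'.filter (fun x => ν' x = some cs) with hVB
  have hVAne : VA.Nonempty := by
    rw [hS] at hcsS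
    obtain ⟨x, hx1, hx2⟩ := (Finset.mem_filter.mp hcsS).2
    exact ⟨x, Finset.mem_filter.mpr ⟨hx1, hx2⟩⟩
  have hVBne : VB.Nonempty := by
    apply Finset.card_pos.mp
    have h1 : 0 < VA.card := Finset.card_pos.mpr hVAne
    have := hFIN (some cs)
    rw [hVB]
    rw [hVA] at h1
    omega
  have hdisjAB : ∀ x, x ∈ VA → x ∈ VB → False := by
    intro x h1 h2
    exact hA' x (Finset.mem_of_mem_filter _ h1)
      (((Finset.mem_filter.mp h1).2).trans ((Finset.mem_filter.mp h2).2).symm)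
  have memS_ν : ∀ x ∈ T', ∀ f : C, ν x = some f → f ∈ S := by
    intro x hx f hf
    rw [hS]
    exact Finset.mem_filter.mpr ⟨Finset.mem_univ _, ⟨x, hx, hf⟩⟩
  have memS_ν' : ∀ x ∈ T', ∀ f : C, ν' x = some f → f ∈ S := by
    intro x hx f hf
    have hpos : 0 < (T'.filter (fun y => ν' y = some f)).card :=
      Finset.card_pos.mpr ⟨x, Finset.mem_filter.mpr ⟨hx, hf⟩⟩
    have heq := hFIN (some f)
    have : (T'.filter (fun y => ν y = some f)).Nonempty := Finset.card_pos.mp (by omega)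
    obtain ⟨y, hy⟩ := this
    exact memS_ν y (Finset.mem_of_mem_filter _ hy) f (Finset.mem_filter.mp hy).2
  have strictpre : ∀ f ∈ S, f ≠ cs → StrictPrec prec (some cs) (some f) := by
    intro f hf hne
    exact ⟨hcsmin f hf, fun hcontra => hne (hAnti f cs hcontra (hcsmin f hf))⟩
  -- the top-priority agent among those exchanged at cs
  obtain ⟨xs, hxsV, hxsmax⟩ := p_max_exists (p cs) (hp cs) (VA ∪ VB)
    ⟨hVAne.choose, Finset.mem_union_left _ hVAne.choose_spec⟩
  haveI := hp cs
  rcases Finset.mem_union.mp hxsV with hxsA | hxsB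
  · -- xs ∈ VA : violate RespectsPrec of ν' using g
    have hxsT : xs ∈ T' := Finset.mem_of_mem_filter _ hxsA
    have hxsν : ν xs = some cs := (Finset.mem_filter.mp hxsA).2
    have hxsnB : xs ∉ VB := fun hmem => hdisjAB xs hxsA hmem
    obtain ⟨j, hjB⟩ := hVBne
    have hjν' : ν' j = some cs := (Finset.mem_filter.mp hjB).2
    have hjne : j ≠ xs := fun hjeq => hxsnB (hjeq ▸ hjB)
    apply hν'r
    refine ⟨xs, j, cs, hjν', ?_, ?_, g, hmatchg, hcompg, ?_, ?_, ?_, hMCg, hMBg⟩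
    · rcases hx : ν' xs with _ | f
      · exact trivial
      · have hfS : f ∈ S := memS_ν' xs hxsT f hx
        have hfne : f ≠ cs := fun hfeq =>
          hxsnB (Finset.mem_filter.mpr ⟨hxsT, by rw [hx, hfeq]⟩)
        exact strictpre f hfS hfne
    · exact hxsmax j (Finset.mem_union_right _ hjB) hjne
    · intro k ck hk hsp
      by_cases hkT : k ∈ T'
      · exact absurd (hcsmin ck (memS_ν' k hkT ck hk)) hsp.2
      · simp [hg, hkT]
    · intro l hl hpl
      by_cases hlT : l ∈ T'
      · exfalso
        have hlB : l ∈ VB := Finset.mem_filter.mpr ⟨hlT, hl⟩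
        have hlne : l ≠ xs := fun hleq => hxsnB (hleq ▸ hlB)
        have := hxsmax l (Finset.mem_union_right _ hlB) hlne
        exact (irrefl_of (p cs) (some xs)) (_root_.trans this hpl)
      · simp [hg, hlT]
    · simp only [hg, if_pos hxsT]
      exact hxsν
  · -- xs ∈ VB : violate RespectsPrec of ν using h
    have hxsT : xs ∈ T' := Finset.mem_of_mem_filter _ hxsB
    have hxsν' : ν' xs = some cs := (Finset.mem_filter.mp hxsB).2
    have hxsnA : xs ∉ VA := fun hmem => hdisjAB xs hmem hxsB
    obtain ⟨j, hjA⟩ := hVAne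
    have hjν : ν j = some cs := (Finset.mem_filter.mp hjA).2
    have hjne : j ≠ xs := fun hjeq => hxsnA (hjeq ▸ hjA)
    apply hνr
    refine ⟨xs, j, cs, hjν, ?_, ?_, h, hmatchh, hcomph, ?_, ?_, ?_, hMCh, hMBh⟩
    · rcases hx : ν xs with _ | f
      · exact trivial
      · have hfS : f ∈ S := memS_ν xs hxsT f hx
        have hfne : f ≠ cs := fun hfeq =>
          hxsnA (Finset.mem_filter.mpr ⟨hxsT, by rw [hx, hfeq]⟩)
        exact strictpre f hfS hfne
    · exact hxsmax j (Finset.mem_union_left _ hjA) hjne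
    · intro k ck hk hsp
      by_cases hkT : k ∈ T'
      · exact absurd (hcsmin ck (memS_ν k hkT ck hk)) hsp.2
      · simp [hh, hkT]
    · intro l hl hpl
      by_cases hlT : l ∈ T'
      · exfalso
        have hlA : l ∈ VA := Finset.mem_filter.mpr ⟨hlT, hl⟩
        have hlne : l ≠ xs := fun hleq => hxsnA (hleq ▸ hlA)
        have := hxsmax l (Finset.mem_union_left _ hlA) hlne
        exact (irrefl_of (p cs) (some xs)) (_root_.trans this hpl)
      · simp [hh, hlT]
    · simp only [hh, if_pos hxsT]
      exact hxsν'

private lemma aux_lemma {I C : Type*} [Fintype I] [DecidableEq I] [Fintype C] [DecidableEq C]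
    (q : C → ℕ) (Cstar : Finset C) (prec : C → C → Prop)
    (hTrans : ∀ a b c : C, prec a b → prec b c → prec a c)
    (hTotal : ∀ a b : C, prec a b ∨ prec b a)
    (hAnti : ∀ a b : C, prec a b → prec b a → a = b)
    (p : C → Option I → Option I → Prop)
    (hp : ∀ c : C, IsStrictTotalOrder (Option I) (p c))
    (ν ν' : I → Option C)
    (hνM : IsMatching q ν) (hνC : Compliant p ν) (hνmax : MaxCard q p ν)
    (hνben : MaxBenef q p Cstar ν) (hνr : RespectsPrec q p Cstar prec ν)
    (hν'M : IsMatching q ν') (hν'C : Compliant p ν') (hν'max : MaxCard q p ν')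
    (hν'ben : MaxBenef q p Cstar ν') (hν'r : RespectsPrec q p Cstar prec ν') :
    ∀ (fuel : ℕ) (T : Finset I) (fstar : C),
      (∀ x ∈ T, ν x ≠ ν' x) →
      (∀ o : Option C, (T.filter (fun x => ν' x = o)).card + (if o = none then 1 else 0)
          = (T.filter (fun x => ν x = o)).card + (if o = some fstar then 1 else 0)) →
      Fintype.card I ≤ T.card + fuel → False := by
  classical
  intro fuel
  induction fuel with
  | zero =>
    intro T fstar hA hcnt hbound
    by_cases hstuck : ∀ x, ν x = some fstar → ν' x ≠ some fstar → x ∈ T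
    · exact stuck_case q p ν ν' hνM hνC hνmax hν'M hν'C T fstar hA hcnt hstuck
    · push_neg at hstuck
      obtain ⟨x, _, _, hx3⟩ := hstuck
      have hle : (insert x T).card ≤ Fintype.card I := by
        rw [← Finset.card_univ]
        exact Finset.card_le_card (Finset.subset_univ _)
      rw [Finset.card_insert_of_notMem hx3] at hle
      omega
  | succ n ih =>
    intro T fstar hA hcnt hbound
    by_cases hstuck : ∀ x, ν x = some fstar → ν' x ≠ some fstar → x ∈ T
    · exact stuck_case q p ν ν' hνM hνC hνmax hν'M hν'C T fstar hA hcnt hstuck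
    · push_neg at hstuck
      obtain ⟨x, hx1, hx2, hx3⟩ := hstuck
      rcases hx' : ν' x with _ | fnew
      · exact finish_case q Cstar prec hTrans hTotal hAnti p hp ν ν'
          hνM hνC hνmax hνben hνr hν'M hν'C hν'max hν'ben hν'r
          T fstar x hx3 hx1 hx' hA hcnt
      · refine ih (insert x T) fnew ?_ ?_ ?_
        · intro y hy
          rcases Finset.mem_insert.mp hy with rfl | hy
          · intro heq
            rw [hx1, hx'] at heq
            exact hx2 (hx'.trans heq.symm)
          · exact hA y hy
        · intro o
          rw [card_filter_insert x T hx3 (fun y => ν' y = o),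
            card_filter_insert x T hx3 (fun y => ν y = o)]
          have hc := hcnt o
          rw [hx1, hx']
          rcases o with _ | c
          · simp at hc ⊢; omega
          · by_cases h1 : fstar = c <;> by_cases h2 : fnew = c <;>
              simp only [Option.some.injEq, reduceCtorEq, if_false, h1, h2, if_true,
                if_pos, if_neg, eq_self_iff_true, Ne.symm, eq_comm] at hc ⊢ <;>
              simp [h1, h2, eq_comm] at hc ⊢ <;> omega
        · rw [Finset.card_insert_of_notMem hx3]
          omega

private lemma core_lemma {I C : Type*} [Fintype I] [DecidableEq I] [Fintype C] [DecidableEq C]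
    (q : C → ℕ) (Cstar : Finset C) (prec : C → C → Prop)
    (hTrans : ∀ a b c : C, prec a b → prec b c → prec a c)
    (hTotal : ∀ a b : C, prec a b ∨ prec b a)
    (hAnti : ∀ a b : C, prec a b → prec b a → a = b)
    (p : C → Option I → Option I → Prop)
    (hp : ∀ c : C, IsStrictTotalOrder (Option I) (p c))
    (ν ν' : I → Option C)
    (hνM : IsMatching q ν) (hνC : Compliant p ν) (hνmax : MaxCard q p ν)
    (hνben : MaxBenef q p Cstar ν) (hνr : RespectsPrec q p Cstar prec ν)
    (hν'M : IsMatching q ν') (hν'C : Compliant p ν') (hν'max : MaxCard q p ν')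
    (hν'ben : MaxBenef q p Cstar ν') (hν'r : RespectsPrec q p Cstar prec ν')
    (u : I) (hu : ν u = none) (f₀ : C) (hu' : ν' u = some f₀) : False := by
  classical
  refine aux_lemma q Cstar prec hTrans hTotal hAnti p hp ν ν'
    hνM hνC hνmax hνben hνr hν'M hν'C hν'max hν'ben hν'r
    (Fintype.card I) {u} f₀ ?_ ?_ ?_
  · intro x hx
    rw [Finset.mem_singleton] at hx
    subst hx
    rw [hu, hu']
    simp
  · intro o
    rw [Finset.filter_singleton, Finset.filter_singleton]
    rcases o with _ | c
    · simp [hu, hu']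
    · rcases eq_or_ne c f₀ with rfl | hc
      · simp [hu, hu']
      · simp [hu, hu', hc, Ne.symm hc]
  · simp

/-- With a strict total precedence order over categories, if
`P'` is obtained from `P` by agent `i` hiding categories (i.e. `P` is an
`i`-improvement of `P'`), and `μ` (resp. `μ'`) is an eligibility-compliant
matching for the system with profile `P` (resp. `P'`) with maximum
cardinality and maximum beneficiary assignment respecting precedence over
categories, then `μ(i) = ∅` implies `μ'(i) = ∅`. -/
theorem SCU_no_incentive_to_hide
    [Fintype I] [Fintype C] [DecidableEq C]
    (q : C → ℕ) (Cstar : Finset C) (prec : C → C → Prop)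
    (hTrans : ∀ a b c : C, prec a b → prec b c → prec a c)
    (hTotal : ∀ a b : C, prec a b ∨ prec b a)
    (hAnti : ∀ a b : C, prec a b → prec b a → a = b)
    (P P' : C → Option I → Option I → Prop)
    (hP : ∀ c : C, IsStrictTotalOrder (Option I) (P c))
    (hP' : ∀ c : C, IsStrictTotalOrder (Option I) (P' c))
    (i : I) (hhide : Improves i P' P)
    (μ μ' : I → Option C)
    (hμ : IsMatching q μ) (hμc : Compliant P μ)
    (hmax : MaxCard q P μ) (hben : MaxBenef q P Cstar μ)
    (hresp : RespectsPrec q P Cstar prec μ)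
    (hμ' : IsMatching q μ') (hμ'c : Compliant P' μ')
    (hmax' : MaxCard q P' μ') (hben' : MaxBenef q P' Cstar μ')
    (hresp' : RespectsPrec q P' Cstar prec μ')
    (hi : μ i = none) :
    μ' i = none := by
  classical
  by_contra hne
  obtain ⟨c₀, hc₀⟩ : ∃ c, μ' i = some c := by
    rcases hmi : μ' i with _ | c
    · exact absurd hmi hne
    · exact ⟨c, rfl⟩
  have offiff : ∀ (c : C) (x y : Option I), x ≠ some i → y ≠ some i →
      (P c x y ↔ P' c x y) := fun c => (hhide c).1
  have upgrade : ∀ (c : C) (x : Option I), x ≠ some i →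
      P' c (some i) x → P c (some i) x := fun c => (hhide c).2
  have asymmP : ∀ (c : C) (x y : Option I), P c x y → P c y x → False := by
    intro c x y h1 h2
    haveI := hP c
    exact (irrefl_of (P c) x) (_root_.trans h1 h2)
  -- compliance transfers
  have compl_P'_to_P : ∀ ρ : I → Option C, Compliant P' ρ → Compliant P ρ := by
    intro ρ hρ k c hk
    by_cases hki : k = i
    · subst hki
      exact upgrade c none (by simp) (hρ k c hk)
    · exact (offiff c (some k) none (by simp [hki]) (by simp)).mpr (hρ k c hk)
  have compl_μ_P' : Compliant P' μ := by
    intro k c hk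
    have hki : k ≠ i := by
      intro hkeq
      rw [hkeq, hi] at hk
      exact nomatch hk
    exact (offiff c (some k) none (by simp [hki]) (by simp)).mp (hμc k c hk)
  have mc_le1 : matchedCount μ' ≤ matchedCount μ := hmax μ' hμ' (compl_P'_to_P μ' hμ'c)
  have mc_le2 : matchedCount μ ≤ matchedCount μ' := hmax' μ hμ compl_μ_P'
  have bc_le1 : benefCount Cstar μ' ≤ benefCount Cstar μ := hben μ' hμ' (compl_P'_to_P μ' hμ'c)
  have bc_le2 : benefCount Cstar μ ≤ benefCount Cstar μ' := hben' μ hμ compl_μ_P'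
  have maxc_μ_P' : MaxCard q P' μ := fun ρ h1 h2 => hmax ρ h1 (compl_P'_to_P ρ h2)
  have maxb_μ_P' : MaxBenef q P' Cstar μ := fun ρ h1 h2 => hben ρ h1 (compl_P'_to_P ρ h2)
  -- RespectsPrec transfers from P to P'
  have resp_μ_P' : RespectsPrec q P' Cstar prec μ := by
    rintro ⟨i₀, j, cj, hj, hsp, hpr, μ'', hm, hc, hEarly, hAbove, hAssign, hMC, hMB⟩
    have hjne : j ≠ i := by
      intro hjeq
      rw [hjeq, hi] at hj
      exact nomatch hj
    apply hresp
    refine ⟨i₀, j, cj, hj, hsp, ?_, μ'', hm, compl_P'_to_P μ'' hc, hEarly, ?_, hAssign, ?_, ?_⟩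
    · by_cases hi₀ : i₀ = i
      · subst hi₀
        exact upgrade cj (some j) (by simp [hjne]) hpr
      · exact (offiff cj (some i₀) (some j) (by simp [hi₀]) (by simp [hjne])).mpr hpr
    · intro l hl hPl
      have hlne : l ≠ i := by
        intro hleq
        rw [hleq, hi] at hl
        exact nomatch hl
      apply hAbove l hl
      by_cases hi₀ : i₀ = i
      · rw [hi₀] at hPl ⊢
        haveI := hP' cj
        rcases trichotomous_of (P' cj) (some l) (some i) with htri | htri | htri
        · exact htri
        · exact absurd (Option.some_injective _ htri) hlne
        · exact absurd (upgrade cj (some l) (by simp [hlne]) htri)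
            (fun hcon => asymmP cj _ _ hPl hcon)
      · exact (offiff cj (some l) (some i₀) (by simp [hlne]) (by simp [hi₀])).mp hPl
    · intro ρ h1 h2
      have h3 : matchedCount ρ ≤ matchedCount μ := hmax ρ h1 h2
      have h4 : matchedCount μ ≤ matchedCount μ'' := hMC μ hμ compl_μ_P'
      omega
    · intro ρ h1 h2
      have h3 : benefCount Cstar ρ ≤ benefCount Cstar μ := hben ρ h1 h2
      have h4 : benefCount Cstar μ ≤ benefCount Cstar μ'' := hMB μ hμ compl_μ_P'
      omega
  exact core_lemma q Cstar prec hTrans hTotal hAnti P' hP' μ μ'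
    hμ compl_μ_P' maxc_μ_P' maxb_μ_P' resp_μ_P'
    hμ' hμ'c hmax' hben' hresp' i hi c₀ hc₀
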